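/- Let Γ be a simplicial complex on a vertex set U and Λ a simplicial complex on a vertex set V with U ∩ V = ∅, and let Δ = Γ * Λ be their simplicial join, a complex on W = U ⊔ V. Let R = K[x_u : u ∈ U], S = K[x_v : v ∈ V], and T = R ⊗_K S = K[x_w : w ∈ W] over a field K. Then I_Δ^(2) = I_Δ² (in T) if and only if I_Γ^(2) = I_Γ² (in R) and I_Λ^(2) = I_Λ² (in S). -/

import Mathlib

open MvPolynomial CategoryTheory

/-- `Δ` is a simplicial complex on the vertex set `V`: it is closed under subsets,
contains the empty face and contains every singleton. -/
def IsSimplicialComplex {V : Type} (Δ : Set (Finset V)) : Prop :=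
  (∀ F ∈ Δ, ∀ G, G ⊆ F → G ∈ Δ) ∧ (∅ : Finset V) ∈ Δ ∧ ∀ v : V, ({v} : Finset V) ∈ Δ

/-- The Stanley–Reisner ideal of `Δ`: the ideal generated by the squarefree monomials
`∏_{i ∈ F} x_i` for the non-faces `F` of `Δ`. -/
noncomputable def SRIdeal (K : Type) [Field K] {V : Type} (Δ : Set (Finset V)) :
    Ideal (MvPolynomial V K) :=
  Ideal.span ((fun F : Finset V => ∏ i ∈ F, X i) '' {F | F ∉ Δ})

/-- The irrelevant maximal ideal `m = (x_v : v ∈ V)` of the polynomial ring. -/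
noncomputable def mxIdeal (K : Type) [Field K] (V : Type) : Ideal (MvPolynomial V K) :=
  Ideal.span (Set.range (X : V → MvPolynomial V K))

/-- The depth of the ideal `m` on the ring `A`: the supremum of the lengths of
regular sequences on `A` contained in `m`. -/
noncomputable def ringDepth (A : Type) [CommRing A] (m : Ideal A) : ℕ∞ :=
  sSup {d : ℕ∞ | ∃ rs : List A, (rs.length : ℕ∞) = d ∧ (∀ r ∈ rs, r ∈ m) ∧
    RingTheory.Sequence.IsRegular A rs}

/-- `S ⧸ J` is Cohen–Macaulay: its depth (with respect to the image of the maximal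
ideal `m`) equals its Krull dimension. -/
def IsCMQuot (S : Type) [CommRing S] (m J : Ideal S) : Prop :=
  ((ringDepth (S ⧸ J) (m.map (Ideal.Quotient.mk J)) : ℕ∞) : WithBot ℕ∞) = ringKrullDim (S ⧸ J)

/-- The second symbolic power of an ideal `I`: the intersection of `P ^ 2` over the
minimal primes `P` of `I`. -/
noncomputable def symb2 {S : Type} [CommRing S] (I : Ideal S) : Ideal S :=
  ⨅ P ∈ I.minimalPrimes, P ^ 2

/-- `Ext_A^i(A/m, A)`. -/
noncomputable def extPow (A : Type) [CommRing A] (m : Ideal A) (i : ℕ) : ModuleCat A :=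
  ((Ext A (ModuleCat A) i).obj (Opposite.op (ModuleCat.of A (A ⧸ m)))).obj (ModuleCat.of A A)

/-- `S ⧸ J` (with maximal ideal the image of `m`) is Gorenstein: it is Cohen–Macaulay and,
with `d = dim S/J` and `k = (S/J)/m` the residue field, the Bass numbers are those of a
Gorenstein ring: `Ext^i(k, S/J) = 0` for `i ≠ d` and `Ext^d(k, S/J) ≅ k`. -/
def IsGorQuot (S : Type) [CommRing S] (m J : Ideal S) : Prop :=
  IsCMQuot S m J ∧ ∃ d : ℕ, ((d : ℕ∞) : WithBot ℕ∞) = ringKrullDim (S ⧸ J) ∧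
    (∀ i : ℕ, i ≠ d → Subsingleton (extPow (S ⧸ J) (m.map (Ideal.Quotient.mk J)) i)) ∧
    Nonempty ((extPow (S ⧸ J) (m.map (Ideal.Quotient.mk J)) d) ≃ₗ[S ⧸ J]
      ((S ⧸ J) ⧸ (m.map (Ideal.Quotient.mk J))))

/-- `S ⧸ J` is quasi-Buchsbaum: `m` annihilates the local cohomology module
`H_m^i(S/J)` for all `i < dim S/J`. -/
def IsQuasiBuchsbaum (S : Type) [CommRing S] (m J : Ideal S) : Prop :=
  ∀ i : ℕ, ((i : ℕ∞) : WithBot ℕ∞) < ringKrullDim (S ⧸ J) →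
    ∀ r ∈ m, ∀ x : (localCohomology m i).obj (ModuleCat.of S (S ⧸ J)), r • x = 0

/-- `S ⧸ J` has finite local cohomology (FLC): the local cohomology module `H_m^i(S/J)`
has finite length (equivalently, is both Noetherian and Artinian) for all `i < dim S/J`. -/
def HasFLC (S : Type) [CommRing S] (m J : Ideal S) : Prop :=
  ∀ i : ℕ, ((i : ℕ∞) : WithBot ℕ∞) < ringKrullDim (S ⧸ J) →
    IsNoetherian S ((localCohomology m i).obj (ModuleCat.of S (S ⧸ J))) ∧
    IsArtinian S ((localCohomology m i).obj (ModuleCat.of S (S ⧸ J)))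

/-- Serre's condition `(S₂)`: for every prime `P` of `A`,
`depth A_P ≥ min (dim A_P) 2`. -/
def SerreS2 (A : Type) [CommRing A] : Prop :=
  ∀ (P : Ideal A) (hP : P.IsPrime),
    haveI := hP
    min (ringKrullDim (Localization.AtPrime P)) 2 ≤
      ((ringDepth (Localization.AtPrime P)
        (IsLocalRing.maximalIdeal (Localization.AtPrime P)) : ℕ∞) : WithBot ℕ∞)

/-- The link of a face `F` in `Δ`. -/
def linkOf {V : Type} [DecidableEq V] (Δ : Set (Finset V)) (F : Finset V) : Set (Finset V) :=
  {H | H ∈ Δ ∧ H ∩ F = ∅ ∧ H ∪ F ∈ Δ}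

/-- The 1-skeleton of the complex `Γ` (the graph on the vertices of `Γ` whose edges are the
1-dimensional faces of `Γ`) is connected of diameter at most 2: any two distinct vertices
are joined by a path of length at most 2. -/
def skeletonDiamLE2 {V : Type} [DecidableEq V] (Γ : Set (Finset V)) : Prop :=
  ∀ u v : V, ({u} : Finset V) ∈ Γ → ({v} : Finset V) ∈ Γ → u ≠ v →
    (({u, v} : Finset V) ∈ Γ ∨ ∃ w : V, ({u, w} : Finset V) ∈ Γ ∧ ({w, v} : Finset V) ∈ Γ)

/-- `linkOf Δ F` has dimension at least 1, i.e. it has a face with at least 2 vertices. -/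
def linkDimGE1 {V : Type} [DecidableEq V] (Δ : Set (Finset V)) (F : Finset V) : Prop :=
  ∃ H ∈ linkOf Δ F, 2 ≤ H.card

/-- The simplicial join of `Γ` (on `U`) and `Λ` (on `V`), as a complex on `U ⊕ V`. -/
def simplicialJoin {U V : Type} [DecidableEq U] [DecidableEq V]
    (Γ : Set (Finset U)) (Λ : Set (Finset V)) : Set (Finset (U ⊕ V)) :=
  {H | ∃ F ∈ Γ, ∃ G ∈ Λ,
    H = F.map (Function.Embedding.inl) ∪ G.map (Function.Embedding.inr)}

open Pointwise
set_option linter.unusedSectionVars false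



variable {σ K : Type} [DecidableEq σ] [Field K]

noncomputable def indF (F : Finset σ) : σ →₀ ℕ := ∑ i ∈ F, Finsupp.single i 1

lemma indF_apply (F : Finset σ) (j : σ) : indF F j = if j ∈ F then 1 else 0 := by
  simp only [indF, Finsupp.finset_sum_apply, Finsupp.single_apply]
  rw [Finset.sum_ite_eq' F j (fun _ => 1)]

lemma monomial_indF (F : Finset σ) : (monomial (indF F) (1 : K)) = ∏ i ∈ F, X i := by
  induction F using Finset.induction with
  | empty => simp [indF]
  | insert _ _ h ih =>
    rw [Finset.prod_insert h, ← ih, indF, Finset.sum_insert h, ← indF,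
      monomial_single_add, pow_one]

lemma indF_le_iff (F : Finset σ) (m : σ →₀ ℕ) :
    indF F ≤ m ↔ ∀ i ∈ F, 1 ≤ m i := by
  rw [Finsupp.le_def]
  constructor
  · intro h i hi; have := h i; rwa [indF_apply, if_pos hi] at this
  · intro h i; rw [indF_apply]; split
    · exact h _ ‹_›
    · exact Nat.zero_le _

lemma X_eq_monomial (i : σ) : (X i : MvPolynomial σ K) = monomial (Finsupp.single i 1) 1 := by
  rw [← C_mul_X_eq_monomial, map_one, one_mul]

lemma SRIdeal_eq_span (Δ : Set (Finset σ)) :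
    SRIdeal K Δ =
      Ideal.span ((fun m => monomial m (1 : K)) '' (indF '' {F | F ∉ Δ})) := by
  rw [SRIdeal, Set.image_image]
  congr 1
  exact Set.image_congr fun F _ => (monomial_indF F).symm

lemma mem_SRIdeal {Δ : Set (Finset σ)} {f : MvPolynomial σ K} :
    f ∈ SRIdeal K Δ ↔ ∀ m ∈ f.support, ∃ F, F ∉ Δ ∧ indF F ≤ m := by
  rw [SRIdeal_eq_span, mem_ideal_span_monomial_image]
  simp only [Set.mem_image, Set.mem_setOf_eq]
  constructor
  · intro h m hm
    obtain ⟨si, ⟨F, hF, rfl⟩, hle⟩ := h m hm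
    exact ⟨F, hF, hle⟩
  · intro h m hm
    obtain ⟨F, hF, hle⟩ := h m hm
    exact ⟨indF F, ⟨F, hF, rfl⟩, hle⟩

lemma span_monomial_sq (A : Set (σ →₀ ℕ)) :
    (Ideal.span ((fun m => monomial m (1 : K)) '' A)) ^ 2 =
      Ideal.span ((fun m => monomial m (1 : K)) '' (A + A)) := by
  rw [pow_two, Ideal.span_mul_span']
  congr 1
  ext x
  constructor
  · rintro ⟨-, ⟨a, ha, rfl⟩, -, ⟨b, hb, rfl⟩, rfl⟩
    exact ⟨a + b, Set.add_mem_add ha hb, by simp [monomial_mul]⟩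
  · rintro ⟨-, ⟨a, ha, b, hb, rfl⟩, rfl⟩
    exact ⟨monomial a 1, ⟨a, ha, rfl⟩, monomial b 1, ⟨b, hb, rfl⟩,
      by simp [monomial_mul]⟩

lemma mem_span_monomial_sq {A : Set (σ →₀ ℕ)} {f : MvPolynomial σ K} :
    f ∈ (Ideal.span ((fun m => monomial m (1 : K)) '' A)) ^ 2 ↔
      ∀ m ∈ f.support, ∃ a ∈ A, ∃ b ∈ A, a + b ≤ m := by
  rw [span_monomial_sq, mem_ideal_span_monomial_image]
  constructor
  · intro h m hm
    obtain ⟨si, ⟨a, ha, b, hb, rfl⟩, hle⟩ := h m hm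
    exact ⟨a, ha, b, hb, hle⟩
  · intro h m hm
    obtain ⟨a, ha, b, hb, hle⟩ := h m hm
    exact ⟨a + b, Set.add_mem_add ha hb, hle⟩

lemma mem_SRIdeal_sq {Δ : Set (Finset σ)} {f : MvPolynomial σ K} :
    f ∈ (SRIdeal K Δ) ^ 2 ↔
      ∀ m ∈ f.support, ∃ F, F ∉ Δ ∧ ∃ G, G ∉ Δ ∧ indF F + indF G ≤ m := by
  rw [SRIdeal_eq_span, mem_span_monomial_sq]
  constructor
  · intro h m hm
    obtain ⟨a, ⟨F, hF, rfl⟩, b, ⟨G, hG, rfl⟩, hle⟩ := h m hm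
    exact ⟨F, hF, G, hG, hle⟩
  · intro h m hm
    obtain ⟨F, hF, G, hG, hle⟩ := h m hm
    exact ⟨indF F, ⟨F, hF, rfl⟩, indF G, ⟨G, hG, rfl⟩, hle⟩

variable (K)

noncomputable def PJ (C : Finset σ) : Ideal (MvPolynomial σ K) :=
  Ideal.span (X '' (C : Set σ))

variable {K}

lemma mem_PJ {C : Finset σ} {f : MvPolynomial σ K} :
    f ∈ PJ K C ↔ ∀ m ∈ f.support, ∃ i ∈ C, m i ≠ 0 := by
  rw [PJ, mem_ideal_span_X_image]; simp

lemma X_mem_PJ {C : Finset σ} {i : σ} : (X i : MvPolynomial σ K) ∈ PJ K C ↔ i ∈ C := by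
  rw [mem_PJ]
  constructor
  · intro h
    obtain ⟨j, hj, hne⟩ := h (Finsupp.single i 1) (by simp [support_X])
    rw [Finsupp.single_apply_ne_zero] at hne
    exact hne.1 ▸ hj
  · intro h m hm
    rw [support_X, Finset.mem_singleton] at hm
    exact ⟨i, h, by simp [hm]⟩

/-- the part of `f` whose monomials avoid `C` -/
noncomputable def offPart (C : Finset σ) (f : MvPolynomial σ K) : MvPolynomial σ K :=
  ∑ m ∈ f.support.filter (fun m => ∀ i ∈ C, m i = 0), monomial m (coeff m f)

lemma coeff_offPart (C : Finset σ) (f : MvPolynomial σ K) (m : σ →₀ ℕ) :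
    coeff m (offPart C f) =
      if (∀ i ∈ C, m i = 0) then coeff m f else 0 := by
  classical
  rw [offPart]
  rw [coeff_sum]
  simp_rw [coeff_monomial]
  rw [Finset.sum_ite_eq' (Finset.filter (fun m => ∀ i ∈ C, m i = 0) f.support) m
    (fun x => coeff x f)]
  by_cases h1 : ∀ i ∈ C, m i = 0
  · simp only [Finset.mem_filter, h1, and_true, if_pos, mem_support_iff]
    by_cases h2 : coeff m f = 0
    · simp [h2]
    · simp [h2]
  · simp [Finset.mem_filter, h1]

/-- `f` avoids `C` if no monomial of `f` involves a variable of `C`. -/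
def Avoids (C : Finset σ) (f : MvPolynomial σ K) : Prop :=
  ∀ m ∈ f.support, ∀ i ∈ C, m i = 0

lemma avoids_offPart (C : Finset σ) (f : MvPolynomial σ K) : Avoids C (offPart C f) := by
  intro m hm i hi
  rw [mem_support_iff, coeff_offPart] at hm
  by_contra hne
  exact hm (by rw [if_neg (fun h => hne (h i hi))])

lemma sub_offPart_mem (C : Finset σ) (f : MvPolynomial σ K) : f - offPart C f ∈ PJ K C := by
  rw [mem_PJ]
  intro m hm
  rw [mem_support_iff, coeff_sub, coeff_offPart] at hm
  by_contra hne
  push_neg at hne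
  rw [if_pos hne, sub_self] at hm
  exact hm rfl

lemma eq_zero_of_avoids_mem (C : Finset σ) (f : MvPolynomial σ K)
    (ha : Avoids C f) (hmem : f ∈ PJ K C) : f = 0 := by
  rw [mem_PJ] at hmem
  rw [← support_eq_empty, Finset.eq_empty_iff_forall_notMem]
  intro m hm
  obtain ⟨i, hi, hne⟩ := hmem m hm
  exact hne (ha m hm i hi)

lemma avoids_mul {C : Finset σ} {f g : MvPolynomial σ K}
    (hf : Avoids C f) (hg : Avoids C g) : Avoids C (f * g) := by
  intro m hm i hi
  have := support_mul f g hm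
  rw [Finset.mem_add] at this
  obtain ⟨a, ha, b, hb, rfl⟩ := this
  rw [Finsupp.add_apply, hf a ha i hi, hg b hb i hi]

lemma PJ_isPrime (C : Finset σ) : (PJ K C).IsPrime := by
  constructor
  · rw [Ideal.ne_top_iff_one, mem_PJ]
    intro h
    obtain ⟨i, hi, hne⟩ := h 0 (by simp [mem_support_iff])
    exact hne rfl
  · intro f g hfg
    have key : offPart C f * offPart C g ∈ PJ K C := by
      have : offPart C f * offPart C g =
          f * g - (offPart C f * (g - offPart C g) + (f - offPart C f) * g) := by
        ring
      rw [this]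
      exact Ideal.sub_mem _ hfg (Ideal.add_mem _
        (Ideal.mul_mem_left _ _ (sub_offPart_mem C g))
        (Ideal.mul_mem_right _ _ (sub_offPart_mem C f)))
    have h0 : offPart C f * offPart C g = 0 :=
      eq_zero_of_avoids_mem C _ (avoids_mul (avoids_offPart C f) (avoids_offPart C g)) key
    rcases mul_eq_zero.mp h0 with h | h
    · left; have := sub_offPart_mem C f; rwa [h, sub_zero] at this
    · right; have := sub_offPart_mem C g; rwa [h, sub_zero] at this

lemma single_one_add_single_one_le {i j : σ} {m : σ →₀ ℕ}
    (hi : i ≠ j → 1 ≤ m i ∧ 1 ≤ m j) (hij : i = j → 2 ≤ m i) :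
    Finsupp.single i 1 + Finsupp.single j 1 ≤ m := by
  rw [Finsupp.le_def]
  intro k
  rw [Finsupp.add_apply, Finsupp.single_apply, Finsupp.single_apply]
  by_cases hik : i = k <;> by_cases hjk : j = k
  · subst hik; subst hjk; simpa using hij rfl
  · subst hik; simpa [hjk] using (hi (fun h => hjk (h ▸ rfl))).1
  · subst hjk; simpa [hik] using (hi (fun h => hik (h ▸ rfl))).2
  · simp [hik, hjk]

lemma exists_pair_le_iff {C : Finset σ} {m : σ →₀ ℕ} :
    (∃ i ∈ C, ∃ j ∈ C, Finsupp.single i 1 + Finsupp.single j 1 ≤ m) ↔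
      2 ≤ ∑ i ∈ C, m i := by
  constructor
  · rintro ⟨i, hi, j, hj, hle⟩
    by_cases hij : i = j
    · subst hij
      have h2 : 2 ≤ m i := by
        have := hle i
        simpa using this
      calc 2 ≤ m i := h2
        _ ≤ ∑ i ∈ C, m i := Finset.single_le_sum (fun _ _ => Nat.zero_le _) hi
    · have h1 : 1 ≤ m i := by
        have := hle i; simpa [Finsupp.single_apply, Ne.symm hij] using this
      have h2 : 1 ≤ m j := by
        have := hle j; simpa [Finsupp.single_apply, hij] using this
      calc 2 = 1 + 1 := rfl
        _ ≤ m i + m j := Nat.add_le_add h1 h2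
        _ = ∑ k ∈ ({i, j} : Finset σ), m k := (Finset.sum_pair hij).symm
        _ ≤ ∑ i ∈ C, m i := Finset.sum_le_sum_of_subset (by
            intro k hk; rcases Finset.mem_insert.mp hk with rfl | hk
            · exact hi
            · exact (Finset.mem_singleton.mp hk) ▸ hj)
  · intro h2
    by_cases hex : ∃ i ∈ C, 2 ≤ m i
    · obtain ⟨i, hi, h⟩ := hex
      exact ⟨i, hi, i, hi, single_one_add_single_one_le (fun h' => (h' rfl).elim)
        (fun _ => h)⟩
    · push_neg at hex
      set S := C.filter (fun i => m i ≠ 0) with hS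
      have hsum : ∑ i ∈ C, m i = ∑ i ∈ S, m i := (Finset.sum_filter_ne_zero C).symm
      have hone : ∀ i ∈ S, m i = 1 := by
        intro i hi
        rw [hS, Finset.mem_filter] at hi
        have := hex i hi.1
        omega
      have hcard : 2 ≤ S.card := by
        rw [hsum, Finset.sum_congr rfl hone, Finset.sum_const, smul_eq_mul, mul_one] at h2
        exact h2
      obtain ⟨i, hi, j, hj, hij⟩ := Finset.one_lt_card.mp hcard
      have hiC := (Finset.mem_filter.mp hi).1
      have hjC := (Finset.mem_filter.mp hj).1
      refine ⟨i, hiC, j, hjC, single_one_add_single_one_le ?_ (fun h => (hij h).elim)⟩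
      intro _
      exact ⟨(hone i hi).ge, (hone j hj).ge⟩

lemma PJ_eq_span_monomial (C : Finset σ) :
    PJ K C = Ideal.span ((fun m => monomial m (1 : K)) ''
      ((fun i => Finsupp.single i 1) '' (C : Set σ))) := by
  rw [PJ]
  congr 1
  rw [Set.image_image]
  exact Set.image_congr fun i _ => X_eq_monomial i

lemma mem_PJ_sq {C : Finset σ} {f : MvPolynomial σ K} :
    f ∈ (PJ K C) ^ 2 ↔ ∀ m ∈ f.support, 2 ≤ ∑ i ∈ C, m i := by
  rw [PJ_eq_span_monomial, mem_span_monomial_sq]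
  refine forall₂_congr fun m hm => ?_
  rw [← exists_pair_le_iff]
  constructor
  · rintro ⟨-, ⟨i, hi, rfl⟩, -, ⟨j, hj, rfl⟩, hle⟩
    exact ⟨i, hi, j, hj, hle⟩
  · rintro ⟨i, hi, j, hj, hle⟩
    exact ⟨_, ⟨i, hi, rfl⟩, _, ⟨j, hj, rfl⟩, hle⟩

/-- `C` is a vertex cover of the non-faces of `Δ`. -/
def Cover (Δ : Set (Finset σ)) (C : Finset σ) : Prop :=
  ∀ F : Finset σ, F ∉ Δ → ∃ i ∈ F, i ∈ C

lemma SRIdeal_le_PJ {Δ : Set (Finset σ)} {C : Finset σ} (hC : Cover Δ C) :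
    SRIdeal K Δ ≤ PJ K C := by
  rw [SRIdeal, Ideal.span_le]
  rintro - ⟨F, hF, rfl⟩
  obtain ⟨i, hiF, hiC⟩ := hC F hF
  show ∏ i ∈ F, X i ∈ PJ K C
  rw [← Finset.mul_prod_erase F _ hiF]
  exact Ideal.mul_mem_right _ _ (X_mem_PJ.mpr hiC)

variable [Fintype σ]

/-- the set of variables contained in an ideal -/
noncomputable def coverOf (P : Ideal (MvPolynomial σ K)) : Finset σ :=
  @Finset.filter _ (fun i => X i ∈ P) (Classical.decPred _) Finset.univ

lemma mem_coverOf {P : Ideal (MvPolynomial σ K)} {i : σ} :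
    i ∈ coverOf P ↔ X i ∈ P := by
  simp [coverOf, Finset.mem_filter]

lemma cover_coverOf {Δ : Set (Finset σ)} {P : Ideal (MvPolynomial σ K)}
    (hP : P.IsPrime) (hle : SRIdeal K Δ ≤ P) : Cover Δ (coverOf P) := by
  intro F hF
  have hmem : ∏ i ∈ F, X i ∈ P := hle (Ideal.subset_span ⟨F, hF, rfl⟩)
  haveI := hP
  obtain ⟨i, hiF, hi⟩ := (Ideal.IsPrime.prod_mem_iff).mp hmem
  exact ⟨i, hiF, mem_coverOf.mpr hi⟩

lemma PJ_coverOf_le (P : Ideal (MvPolynomial σ K)) : PJ K (coverOf P) ≤ P := by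
  rw [PJ, Ideal.span_le]
  rintro - ⟨i, hi, rfl⟩
  exact mem_coverOf.mp hi

lemma exists_minimal_cover {Δ : Set (Finset σ)} {C : Finset σ} (hC : Cover Δ C) :
    ∃ C' ⊆ C, Cover Δ C' ∧ ∀ C'', Cover Δ C'' → C'' ⊆ C' → C'' = C' := by
  classical
  obtain ⟨C', hC'mem, hmin⟩ := Finset.exists_min_image
    (C.powerset.filter (Cover Δ)) Finset.card
    ⟨C, by simp [Finset.mem_filter, hC]⟩
  rw [Finset.mem_filter, Finset.mem_powerset] at hC'mem
  refine ⟨C', hC'mem.1, hC'mem.2, ?_⟩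
  intro C'' hc'' hsub
  refine Finset.eq_of_subset_of_card_le hsub (hmin C'' ?_)
  rw [Finset.mem_filter, Finset.mem_powerset]
  exact ⟨hsub.trans hC'mem.1, hc''⟩

lemma PJ_mem_minimalPrimes {Δ : Set (Finset σ)} {C : Finset σ} (hC : Cover Δ C)
    (hmin : ∀ C', Cover Δ C' → C' ⊆ C → C' = C) :
    PJ K C ∈ (SRIdeal K Δ).minimalPrimes := by
  constructor
  · exact ⟨PJ_isPrime C, SRIdeal_le_PJ hC⟩
  · rintro Q ⟨hQp, hQle⟩ hle
    have hcov : Cover Δ (coverOf Q) := cover_coverOf hQp hQle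
    have hsub : coverOf Q ⊆ C := fun i hi => X_mem_PJ.mp (hle (mem_coverOf.mp hi))
    have heq := hmin _ hcov hsub
    calc PJ K C = PJ K (coverOf Q) := by rw [heq]
      _ ≤ Q := PJ_coverOf_le Q

lemma mem_symb2_iff {Δ : Set (Finset σ)} (f : MvPolynomial σ K) :
    f ∈ symb2 (SRIdeal K Δ) ↔
      ∀ C, Cover Δ C → ∀ m ∈ f.support, 2 ≤ ∑ i ∈ C, m i := by
  rw [symb2]
  simp only [Ideal.mem_iInf]
  constructor
  · intro h C hC m hm
    obtain ⟨C', hsub, hcov, hmin⟩ := exists_minimal_cover hC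
    have h1 := h (PJ K C') (PJ_mem_minimalPrimes hcov hmin)
    exact le_trans (mem_PJ_sq.mp h1 m hm) (Finset.sum_le_sum_of_subset hsub)
  · intro h P hP
    have hf : f ∈ (PJ K (coverOf P)) ^ 2 :=
      mem_PJ_sq.mpr (h _ (cover_coverOf hP.1.1 hP.1.2))
    exact Ideal.pow_right_mono (PJ_coverOf_le P) 2 hf

lemma sq_le_symb2 {S : Type} [CommRing S] (I : Ideal S) : I ^ 2 ≤ symb2 I :=
  le_iInf fun P => le_iInf fun hP => Ideal.pow_right_mono hP.1.2 2

/-- the combinatorial condition equivalent to `I_Δ⁽²⁾ = I_Δ²` -/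
def SP (Δ : Set (Finset σ)) : Prop :=
  ∀ m : σ →₀ ℕ, (∀ C, Cover Δ C → 2 ≤ ∑ i ∈ C, m i) →
    ∃ F, F ∉ Δ ∧ ∃ G, G ∉ Δ ∧ indF F + indF G ≤ m

lemma symb2_eq_sq_iff {Δ : Set (Finset σ)} :
    symb2 (SRIdeal K Δ) = (SRIdeal K Δ) ^ 2 ↔ SP Δ := by
  classical
  constructor
  · intro h m hm
    have h1 : (monomial m 1 : MvPolynomial σ K) ∈ symb2 (SRIdeal K Δ) := by
      rw [mem_symb2_iff]
      intro C hC m' hm'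
      rw [support_monomial, if_neg one_ne_zero, Finset.mem_singleton] at hm'
      subst hm'
      exact hm C hC
    rw [h] at h1
    refine mem_SRIdeal_sq.mp h1 m ?_
    rw [support_monomial, if_neg one_ne_zero, Finset.mem_singleton]
  · intro hSP
    refine le_antisymm ?_ (sq_le_symb2 _)
    intro f hf
    rw [mem_SRIdeal_sq]
    intro m hm
    exact hSP m (fun C hC => (mem_symb2_iff f).mp hf C hC m hm)


variable {U V : Type} [DecidableEq U] [DecidableEq V]

noncomputable def toL (H : Finset (U ⊕ V)) : Finset U := H.preimage Sum.inl Sum.inl_injective.injOn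
noncomputable def toR (H : Finset (U ⊕ V)) : Finset V := H.preimage Sum.inr Sum.inr_injective.injOn

lemma mem_toL {H : Finset (U ⊕ V)} {u : U} : u ∈ toL H ↔ Sum.inl u ∈ H :=
  Finset.mem_preimage

lemma mem_toR {H : Finset (U ⊕ V)} {v : V} : v ∈ toR H ↔ Sum.inr v ∈ H :=
  Finset.mem_preimage

lemma toL_map_union (F : Finset U) (G : Finset V) :
    toL (F.map Function.Embedding.inl ∪ G.map Function.Embedding.inr) = F := by
  ext u
  simp [mem_toL, Finset.mem_map]

lemma toR_map_union (F : Finset U) (G : Finset V) :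
    toR (F.map Function.Embedding.inl ∪ G.map Function.Embedding.inr) = G := by
  ext v
  simp [mem_toR, Finset.mem_map]

lemma decompLR (H : Finset (U ⊕ V)) :
    H = (toL H).map Function.Embedding.inl ∪ (toR H).map Function.Embedding.inr := by
  ext x
  cases x with
  | inl u => simp [Finset.mem_map, mem_toL]
  | inr v => simp [Finset.mem_map, mem_toR]

lemma mem_join {Γ : Set (Finset U)} {Λ : Set (Finset V)} {H : Finset (U ⊕ V)} :
    H ∈ simplicialJoin Γ Λ ↔ toL H ∈ Γ ∧ toR H ∈ Λ := by
  constructor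
  · rintro ⟨F, hF, G, hG, rfl⟩
    rw [toL_map_union, toR_map_union]
    exact ⟨hF, hG⟩
  · rintro ⟨h1, h2⟩
    exact ⟨toL H, h1, toR H, h2, decompLR H⟩

lemma sum_split (C : Finset (U ⊕ V)) (m : (U ⊕ V) → ℕ) :
    ∑ x ∈ C, m x = ∑ u ∈ toL C, m (Sum.inl u) + ∑ v ∈ toR C, m (Sum.inr v) := by
  conv_lhs => rw [decompLR C]
  rw [Finset.sum_union, Finset.sum_map, Finset.sum_map]
  · rfl
  · rw [Finset.disjoint_left]
    rintro x hx hx'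
    rw [Finset.mem_map] at hx hx'
    obtain ⟨u, -, rfl⟩ := hx
    obtain ⟨v, -, h⟩ := hx'
    simp [Function.Embedding.inl, Function.Embedding.inr] at h

section Combinatorics
variable {U V : Type} [DecidableEq U] [DecidableEq V] [Fintype U] [Fintype V]

lemma toL_compl (C : Finset (U ⊕ V)) : toL Cᶜ = (toL C)ᶜ := by
  ext u; simp [mem_toL]

lemma toR_compl (C : Finset (U ⊕ V)) : toR Cᶜ = (toR C)ᶜ := by
  ext v; simp [mem_toR]

lemma cover_iff_compl_mem {σ : Type} [DecidableEq σ] [Fintype σ] {Δ : Set (Finset σ)}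
    (hcl : ∀ F ∈ Δ, ∀ G, G ⊆ F → G ∈ Δ) (C : Finset σ) :
    Cover Δ C ↔ Cᶜ ∈ Δ := by
  constructor
  · intro h
    by_contra hc
    obtain ⟨i, hi, hiC⟩ := h _ hc
    rw [Finset.mem_compl] at hi
    exact hi hiC
  · intro h F hF
    rcases Finset.not_subset.mp (fun hsub => hF (hcl _ h F hsub)) with ⟨i, hiF, hiC⟩
    exact ⟨i, hiF, by simpa using hiC⟩

lemma spcond_iff_faces {σ : Type} [DecidableEq σ] [Fintype σ] {Δ : Set (Finset σ)}
    (hcl : ∀ F ∈ Δ, ∀ G, G ⊆ F → G ∈ Δ) (m : σ →₀ ℕ) (k : ℕ) :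
    (∀ C, Cover Δ C → k ≤ ∑ i ∈ C, m i) ↔ (∀ G ∈ Δ, k ≤ ∑ i ∈ Gᶜ, m i) := by
  constructor
  · intro h G hG
    exact h Gᶜ ((cover_iff_compl_mem hcl _).mpr (by rwa [compl_compl]))
  · intro h C hC
    have := h Cᶜ ((cover_iff_compl_mem hcl _).mp hC)
    rwa [compl_compl] at this

lemma join_closed {Γ : Set (Finset U)} {Λ : Set (Finset V)}
    (hΓ : ∀ F ∈ Γ, ∀ G, G ⊆ F → G ∈ Γ) (hΛ : ∀ F ∈ Λ, ∀ G, G ⊆ F → G ∈ Λ) :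
    ∀ F ∈ simplicialJoin Γ Λ, ∀ G, G ⊆ F → G ∈ simplicialJoin Γ Λ := by
  intro F hF G hG
  rw [mem_join] at hF ⊢
  refine ⟨hΓ _ hF.1 _ ?_, hΛ _ hF.2 _ ?_⟩
  · intro u hu; exact mem_toL.mpr (hG (mem_toL.mp hu))
  · intro v hv; exact mem_toR.mpr (hG (mem_toR.mp hv))

lemma support_nonface_iff {σ : Type} [DecidableEq σ] [Fintype σ] {Δ : Set (Finset σ)}
    (hcl : ∀ F ∈ Δ, ∀ G, G ⊆ F → G ∈ Δ) (m : σ →₀ ℕ) :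
    (∀ F ∈ Δ, 1 ≤ ∑ i ∈ Fᶜ, m i) ↔ m.support ∉ Δ := by
  constructor
  · intro h hs
    have := h _ hs
    rw [Nat.one_le_iff_ne_zero] at this
    apply this
    apply Finset.sum_eq_zero
    intro i hi
    rw [Finset.mem_compl, Finsupp.notMem_support_iff] at hi
    exact hi
  · intro hs F hF
    rw [Nat.one_le_iff_ne_zero]
    intro h0
    apply hs
    apply hcl F hF
    intro i hi
    by_contra hiF
    have := Finset.sum_eq_zero_iff.mp h0 i (Finset.mem_compl.mpr hiF)
    exact (Finsupp.mem_support_iff.mp hi) this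
end Combinatorics


section Main
variable {U V : Type} [DecidableEq U] [DecidableEq V] [Fintype U] [Fintype V]

noncomputable def resL (m : (U ⊕ V) →₀ ℕ) : U →₀ ℕ :=
  Finsupp.comapDomain Sum.inl m Sum.inl_injective.injOn

noncomputable def resR (m : (U ⊕ V) →₀ ℕ) : V →₀ ℕ :=
  Finsupp.comapDomain Sum.inr m Sum.inr_injective.injOn

lemma resL_apply (m : (U ⊕ V) →₀ ℕ) (u : U) : resL m u = m (Sum.inl u) := rfl
lemma resR_apply (m : (U ⊕ V) →₀ ℕ) (v : V) : resR m v = m (Sum.inr v) := rfl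

lemma support_resL (m : (U ⊕ V) →₀ ℕ) : (resL m).support = toL m.support := by
  ext u
  rw [Finsupp.mem_support_iff, resL_apply, mem_toL, Finsupp.mem_support_iff]

lemma support_resR (m : (U ⊕ V) →₀ ℕ) : (resR m).support = toR m.support := by
  ext v
  rw [Finsupp.mem_support_iff, resR_apply, mem_toR, Finsupp.mem_support_iff]

lemma toL_map_inl (F : Finset U) :
    toL (F.map (Function.Embedding.inl : U ↪ U ⊕ V)) = F := by
  ext u; simp [mem_toL]

lemma toR_map_inl (F : Finset U) :
    toR (F.map (Function.Embedding.inl : U ↪ U ⊕ V)) = ∅ := by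
  ext v; simp [mem_toR]

lemma toL_map_inr (G : Finset V) :
    toL (G.map (Function.Embedding.inr : V ↪ U ⊕ V)) = ∅ := by
  ext u; simp [mem_toL]

lemma toR_map_inr (G : Finset V) :
    toR (G.map (Function.Embedding.inr : V ↪ U ⊕ V)) = G := by
  ext v; simp [mem_toR]

lemma indF_toL (H : Finset (U ⊕ V)) (u : U) :
    indF (toL H) u = indF H (Sum.inl u) := by
  rw [indF_apply, indF_apply]
  simp [mem_toL]

lemma indF_toR (H : Finset (U ⊕ V)) (v : V) :
    indF (toR H) v = indF H (Sum.inr v) := by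
  rw [indF_apply, indF_apply]
  simp [mem_toR]

lemma indF_map_inl_inl (F : Finset U) (u : U) :
    indF (F.map (Function.Embedding.inl : U ↪ U ⊕ V)) (Sum.inl u) = indF F u := by
  rw [indF_apply, indF_apply]; simp

lemma indF_map_inl_inr (F : Finset U) (v : V) :
    indF (F.map (Function.Embedding.inl : U ↪ U ⊕ V)) (Sum.inr v) = 0 := by
  rw [indF_apply]; simp

lemma indF_map_inr_inl (G : Finset V) (u : U) :
    indF (G.map (Function.Embedding.inr : V ↪ U ⊕ V)) (Sum.inl u) = 0 := by
  rw [indF_apply]; simp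

lemma indF_map_inr_inr (G : Finset V) (v : V) :
    indF (G.map (Function.Embedding.inr : V ↪ U ⊕ V)) (Sum.inr v) = indF G v := by
  rw [indF_apply, indF_apply]; simp

lemma spcond_join_iff {Γ : Set (Finset U)} {Λ : Set (Finset V)}
    (hΓcl : ∀ F ∈ Γ, ∀ G, G ⊆ F → G ∈ Γ) (hΛcl : ∀ F ∈ Λ, ∀ G, G ⊆ F → G ∈ Λ)
    (m : (U ⊕ V) →₀ ℕ) :
    (∀ C, Cover (simplicialJoin Γ Λ) C → 2 ≤ ∑ x ∈ C, m x) ↔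
      ∀ F ∈ Γ, ∀ G ∈ Λ,
        2 ≤ (∑ u ∈ Fᶜ, m (Sum.inl u)) + (∑ v ∈ Gᶜ, m (Sum.inr v)) := by
  rw [spcond_iff_faces (join_closed hΓcl hΛcl)]
  constructor
  · intro h F hF G hG
    have := h (F.map Function.Embedding.inl ∪ G.map Function.Embedding.inr)
      (mem_join.mpr (by rw [toL_map_union, toR_map_union]; exact ⟨hF, hG⟩))
    rwa [sum_split, toL_compl, toR_compl, toL_map_union, toR_map_union] at this
  · intro h Hf hHf
    rw [sum_split, toL_compl, toR_compl]
    exact h _ (mem_join.mp hHf).1 _ (mem_join.mp hHf).2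
end Main

section Main2
variable {U V : Type} [DecidableEq U] [DecidableEq V] [Fintype U] [Fintype V]

lemma SP_join_iff {Γ : Set (Finset U)} {Λ : Set (Finset V)}
    (hΓ : IsSimplicialComplex Γ) (hΛ : IsSimplicialComplex Λ) :
    SP (simplicialJoin Γ Λ) ↔ SP Γ ∧ SP Λ := by
  constructor
  · intro h
    constructor
    · -- SP Γ
      intro m' hm'
      set m : (U ⊕ V) →₀ ℕ := Finsupp.embDomain Function.Embedding.inl m' with hmdef
      have hminl : ∀ u, m (Sum.inl u) = m' u := fun u =>
        Finsupp.embDomain_apply_self Function.Embedding.inl m' u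
      have hminr : ∀ v, m (Sum.inr v) = 0 := fun v =>
        Finsupp.embDomain_notin_range Function.Embedding.inl m' _ (by simp)
      have hcond : ∀ C, Cover (simplicialJoin Γ Λ) C → 2 ≤ ∑ x ∈ C, m x := by
        rw [spcond_join_iff hΓ.1 hΛ.1]
        intro F hF G hG
        have h2 := (spcond_iff_faces hΓ.1 m' 2).mp hm' F hF
        have he : ∑ u ∈ Fᶜ, m (Sum.inl u) = ∑ u ∈ Fᶜ, m' u :=
          Finset.sum_congr rfl fun u _ => hminl u
        rw [he]
        exact le_trans h2 (Nat.le_add_right _ _)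
      obtain ⟨H1, hH1, H2, hH2, hle⟩ := h m hcond
      have hR : ∀ H' : Finset (U ⊕ V), indF H' ≤ indF H1 + indF H2 → toR H' = ∅ := by
        intro H' hle'
        rw [Finset.eq_empty_iff_forall_notMem]
        intro v hv
        have h1 := hle (Sum.inr v)
        have h2 := hle' (Sum.inr v)
        rw [Finsupp.add_apply] at h1 h2
        rw [hminr v] at h1
        rw [indF_apply, if_pos (mem_toR.mp hv)] at h2
        omega
      have hR1 : toR H1 = ∅ := hR H1 (le_add_right le_rfl)
      have hR2 : toR H2 = ∅ := hR H2 (le_add_left le_rfl)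
      refine ⟨toL H1, ?_, toL H2, ?_, ?_⟩
      · exact fun hmem => hH1 (mem_join.mpr ⟨hmem, hR1 ▸ hΛ.2.1⟩)
      · exact fun hmem => hH2 (mem_join.mpr ⟨hmem, hR2 ▸ hΛ.2.1⟩)
      · intro u
        have h1 := hle (Sum.inl u)
        rw [Finsupp.add_apply] at h1
        rw [Finsupp.add_apply, indF_toL, indF_toL]
        rw [hminl u] at h1
        exact h1
    · -- SP Λ (symmetric)
      intro m' hm'
      set m : (U ⊕ V) →₀ ℕ := Finsupp.embDomain Function.Embedding.inr m' with hmdef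
      have hminr : ∀ v, m (Sum.inr v) = m' v := fun v =>
        Finsupp.embDomain_apply_self Function.Embedding.inr m' v
      have hminl : ∀ u, m (Sum.inl u) = 0 := fun u =>
        Finsupp.embDomain_notin_range Function.Embedding.inr m' _ (by simp)
      have hcond : ∀ C, Cover (simplicialJoin Γ Λ) C → 2 ≤ ∑ x ∈ C, m x := by
        rw [spcond_join_iff hΓ.1 hΛ.1]
        intro F hF G hG
        have h2 := (spcond_iff_faces hΛ.1 m' 2).mp hm' G hG
        have he : ∑ v ∈ Gᶜ, m (Sum.inr v) = ∑ v ∈ Gᶜ, m' v :=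
          Finset.sum_congr rfl fun v _ => hminr v
        rw [he]
        exact le_trans h2 (Nat.le_add_left _ _)
      obtain ⟨H1, hH1, H2, hH2, hle⟩ := h m hcond
      have hL : ∀ H' : Finset (U ⊕ V), indF H' ≤ indF H1 + indF H2 → toL H' = ∅ := by
        intro H' hle'
        rw [Finset.eq_empty_iff_forall_notMem]
        intro u hu
        have h1 := hle (Sum.inl u)
        have h2 := hle' (Sum.inl u)
        rw [Finsupp.add_apply] at h1 h2
        rw [hminl u] at h1
        rw [indF_apply, if_pos (mem_toL.mp hu)] at h2
        omega
      have hL1 : toL H1 = ∅ := hL H1 (le_add_right le_rfl)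
      have hL2 : toL H2 = ∅ := hL H2 (le_add_left le_rfl)
      refine ⟨toR H1, ?_, toR H2, ?_, ?_⟩
      · exact fun hmem => hH1 (mem_join.mpr ⟨hL1 ▸ hΓ.2.1, hmem⟩)
      · exact fun hmem => hH2 (mem_join.mpr ⟨hL2 ▸ hΓ.2.1, hmem⟩)
      · intro v
        have h1 := hle (Sum.inr v)
        rw [Finsupp.add_apply] at h1
        rw [Finsupp.add_apply, indF_toR, indF_toR]
        rw [hminr v] at h1
        exact h1
  · rintro ⟨hΓS, hΛS⟩ m hcond
    rw [spcond_join_iff hΓ.1 hΛ.1] at hcond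
    have hsumL : ∀ F : Finset U, ∑ u ∈ Fᶜ, resL m u = ∑ u ∈ Fᶜ, m (Sum.inl u) :=
      fun F => Finset.sum_congr rfl fun u _ => resL_apply m u
    have hsumR : ∀ G : Finset V, ∑ v ∈ Gᶜ, resR m v = ∑ v ∈ Gᶜ, m (Sum.inr v) :=
      fun G => Finset.sum_congr rfl fun v _ => resR_apply m v
    by_cases hA : ∃ F ∈ Γ, ∑ u ∈ Fᶜ, m (Sum.inl u) = 0
    · obtain ⟨F0, hF0, hz⟩ := hA
      have hcondV : ∀ G ∈ Λ, 2 ≤ ∑ v ∈ Gᶜ, resR m v := by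
        intro G hG
        have := hcond F0 hF0 G hG
        rw [hz, zero_add] at this
        rwa [hsumR]
      obtain ⟨G1, hG1, G2, hG2, hle⟩ :=
        hΛS (resR m) ((spcond_iff_faces hΛ.1 (resR m) 2).mpr hcondV)
      refine ⟨G1.map Function.Embedding.inr, ?_, G2.map Function.Embedding.inr, ?_, ?_⟩
      · intro hmem
        have hx := (mem_join.mp hmem).2
        rw [toR_map_inr] at hx
        exact hG1 hx
      · intro hmem
        have hx := (mem_join.mp hmem).2
        rw [toR_map_inr] at hx
        exact hG2 hx
      · intro x
        rw [Finsupp.add_apply]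
        cases x with
        | inl u => rw [indF_map_inr_inl, indF_map_inr_inl]; exact Nat.zero_le _
        | inr v =>
          rw [indF_map_inr_inr, indF_map_inr_inr]
          have := hle v
          rwa [Finsupp.add_apply, resR_apply] at this
    · by_cases hB : ∃ G ∈ Λ, ∑ v ∈ Gᶜ, m (Sum.inr v) = 0
      · obtain ⟨G0, hG0, hz⟩ := hB
        have hcondU : ∀ F ∈ Γ, 2 ≤ ∑ u ∈ Fᶜ, resL m u := by
          intro F hF
          have := hcond F hF G0 hG0
          rw [hz, add_zero] at this
          rwa [hsumL]
        obtain ⟨F1, hF1, F2, hF2, hle⟩ :=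
          hΓS (resL m) ((spcond_iff_faces hΓ.1 (resL m) 2).mpr hcondU)
        refine ⟨F1.map Function.Embedding.inl, ?_, F2.map Function.Embedding.inl, ?_, ?_⟩
        · intro hmem
          have hx := (mem_join.mp hmem).1
          rw [toL_map_inl] at hx
          exact hF1 hx
        · intro hmem
          have hx := (mem_join.mp hmem).1
          rw [toL_map_inl] at hx
          exact hF2 hx
        · intro x
          rw [Finsupp.add_apply]
          cases x with
          | inr v => rw [indF_map_inl_inr, indF_map_inl_inr]; exact Nat.zero_le _
          | inl u =>
            rw [indF_map_inl_inl, indF_map_inl_inl]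
            have := hle u
            rwa [Finsupp.add_apply, resL_apply] at this
      · push_neg at hA hB
        have hU : (resL m).support ∉ Γ := by
          apply (support_nonface_iff hΓ.1 (resL m)).mp
          intro F hF
          rw [Nat.one_le_iff_ne_zero, hsumL]
          exact hA F hF
        have hV : (resR m).support ∉ Λ := by
          apply (support_nonface_iff hΛ.1 (resR m)).mp
          intro G hG
          rw [Nat.one_le_iff_ne_zero, hsumR]
          exact hB G hG
        refine ⟨(resL m).support.map Function.Embedding.inl, ?_,
          (resR m).support.map Function.Embedding.inr, ?_, ?_⟩
        · intro hmem
          have hx := (mem_join.mp hmem).1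
          rw [toL_map_inl] at hx
          exact hU hx
        · intro hmem
          have hx := (mem_join.mp hmem).2
          rw [toR_map_inr] at hx
          exact hV hx
        · intro x
          rw [Finsupp.add_apply]
          cases x with
          | inl u =>
            rw [indF_map_inl_inl, indF_map_inr_inl, add_zero, indF_apply]
            split
            · rename_i hmem
              rw [Finsupp.mem_support_iff, resL_apply] at hmem
              omega
            · exact Nat.zero_le _
          | inr v =>
            rw [indF_map_inl_inr, indF_map_inr_inr, zero_add, indF_apply]
            split
            · rename_i hmem
              rw [Finsupp.mem_support_iff, resR_apply] at hmem
              omega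
            · exact Nat.zero_le _
end Main2


/-- For the simplicial join `Δ = Γ * Λ`: `I_Δ^(2) = I_Δ²` iff
`I_Γ^(2) = I_Γ²` and `I_Λ^(2) = I_Λ²`. -/
theorem stmt14 (U V : Type) [DecidableEq U] [DecidableEq V] [Fintype U] [Fintype V]
    (K : Type) [Field K] (Γ : Set (Finset U)) (Λ : Set (Finset V))
    (hΓ : IsSimplicialComplex Γ) (hΛ : IsSimplicialComplex Λ) :
    symb2 (SRIdeal K (simplicialJoin Γ Λ)) = (SRIdeal K (simplicialJoin Γ Λ)) ^ 2 ↔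
      (symb2 (SRIdeal K Γ) = (SRIdeal K Γ) ^ 2 ∧
        symb2 (SRIdeal K Λ) = (SRIdeal K Λ) ^ 2) := by
  rw [symb2_eq_sq_iff, symb2_eq_sq_iff, symb2_eq_sq_iff]
  exact SP_join_iff hΓ hΛ
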